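/- The number of admissible ideals of the path algebra of the linearly oriented quiver of type A_{s+1} equals the Catalan number C_s = (1/(s+1))·binom(2s, s), via the bijection between such ideals and monotonic lattice paths in an s × s grid. -/
import Mathlib


/-- Monotone lattice-path model: monotone `h : Fin n → ℕ` with `h j ≤ j + c`. -/
def PathModel (n c : ℕ) : Type :=
  {h : Fin n → ℕ // Monotone h ∧ ∀ j : Fin n, h j ≤ (j : ℕ) + c}

/-- Number of such monotone sequences (ballot-type recursion). -/
def wcount : ℕ → ℕ → ℕ
  | 0, _ => 1
  | n + 1, c => ∑ v : Fin (c + 1), wcount n (c + 1 - (v : ℕ))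

@[simp] lemma wcount_zero (c : ℕ) : wcount 0 c = 1 := rfl

lemma wcount_succ_zero (n : ℕ) : wcount (n + 1) 0 = wcount n 1 := by
  simp [wcount]

lemma wcount_succ_succ (n c : ℕ) :
    wcount (n + 1) (c + 1) = wcount n (c + 2) + wcount (n + 1) c := by
  rw [wcount, wcount, Fin.sum_univ_succ]
  simp

instance pathModelFinite (n c : ℕ) : Finite (PathModel n c) := by
  have key : ∀ (x : PathModel n c) (j : Fin n), x.1 j < n + c := by
    intro x j
    have := x.2.2 j
    have := j.2
    omega
  exact Finite.of_injective
    (fun x : PathModel n c => fun j : Fin n => (⟨x.1 j, key x j⟩ : Fin (n + c)))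
    (by
      rintro ⟨h1, p1⟩ ⟨h2, p2⟩ he
      refine Subtype.ext (funext fun j => ?_)
      simpa using congrArg Fin.val (congrFun he j))

/-- Peel off the first value of a monotone sequence. -/
noncomputable def pathModelEquiv (n c : ℕ) :
    PathModel (n + 1) c ≃ Σ v : Fin (c + 1), PathModel n (c + 1 - (v : ℕ)) where
  toFun x :=
    ⟨⟨x.1 0, Nat.lt_succ_of_le (by simpa using x.2.2 0)⟩,
      ⟨fun j => x.1 j.succ - x.1 0,
        ⟨fun a b hab => Nat.sub_le_sub_right (x.2.1 (by simpa using hab)) _,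
         fun j => by
          have h1 := x.2.2 j.succ
          simp only [Fin.val_succ] at h1
          have h2 : x.1 0 ≤ x.1 j.succ := x.2.1 (Fin.zero_le _)
          have h0 : x.1 0 ≤ c := by simpa using x.2.2 0
          simp only [Fin.val_succ, Fin.val_mk]
          omega⟩⟩⟩
  invFun y :=
    ⟨Fin.cases (y.1 : ℕ) (fun j => y.2.1 j + (y.1 : ℕ)),
      ⟨by
        intro a b hab
        induction a using Fin.cases with
        | zero =>
          induction b using Fin.cases with
          | zero => exact le_refl _
          | succ b => simp only [Fin.cases_zero, Fin.cases_succ]; omega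
        | succ a =>
          induction b using Fin.cases with
          | zero =>
            have : (a.succ : ℕ) ≤ (0 : Fin (n+1)) := hab
            simp at this
          | succ b =>
            simp only [Fin.cases_succ]
            have hab' : a ≤ b := by
              have := hab
              simp only [Fin.le_def, Fin.val_succ] at this ⊢
              omega
            exact Nat.add_le_add_right (y.2.2.1 hab') _,
       by
        intro j
        induction j using Fin.cases with
        | zero =>
          simpa using Nat.le_of_lt_succ (y.1).2
        | succ j =>
          have hb := y.2.2.2 j
          have hv : (y.1 : ℕ) ≤ c := Nat.le_of_lt_succ (y.1).2
          simp only [Fin.cases_succ, Fin.val_succ]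
          omega⟩⟩
  left_inv x := by
    rcases x with ⟨h, hm, hb⟩
    refine Subtype.ext (funext fun j => ?_)
    induction j using Fin.cases with
    | zero => simp
    | succ j =>
      have h2 : h 0 ≤ h j.succ := hm (Fin.zero_le _)
      simp only [Fin.cases_succ]
      omega
  right_inv y := by
    rcases y with ⟨v, h, hm, hb⟩
    refine Sigma.ext (Fin.ext ?_) (heq_of_eq (Subtype.ext (funext fun j => ?_)))
    · simp
    · simp

lemma card_pathModel (n c : ℕ) : Nat.card (PathModel n c) = wcount n c := by
  induction n generalizing c with
  | zero =>
    rw [wcount_zero]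
    have h1 : Subsingleton (PathModel 0 c) :=
      ⟨by rintro ⟨h1, _⟩ ⟨h2, _⟩; exact Subtype.ext (funext fun j => j.elim0)⟩
    have h2 : Nonempty (PathModel 0 c) :=
      ⟨⟨fun j => j.elim0, ⟨fun a => a.elim0, fun j => j.elim0⟩⟩⟩
    exact Nat.card_eq_one_iff_unique.mpr ⟨h1, h2⟩
  | succ n ih =>
    rw [Nat.card_congr (pathModelEquiv n c)]
    haveI : ∀ v : Fin (c + 1), Fintype (PathModel n (c + 1 - (v : ℕ))) :=
      fun v => Fintype.ofFinite _
    rw [Nat.card_eq_fintype_card, Fintype.card_sigma, wcount]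
    refine Finset.sum_congr rfl fun v _ => ?_
    rw [← Nat.card_eq_fintype_card, ih]

lemma wcount_one (c : ℕ) : wcount 1 c = c + 1 := by
  induction c with
  | zero => rw [wcount_succ_zero]; rfl
  | succ c ih => rw [wcount_succ_succ, ih, wcount_zero]; omega

lemma wcount_formula (n c : ℕ) :
    (wcount (n + 1) c : ℤ) =
      ((2 * n + 2 + c).choose (n + 1) : ℤ) - (2 * n + 2 + c).choose n := by
  induction n generalizing c with
  | zero =>
    rw [wcount_one]
    have h1 : (2 + c).choose 1 = 2 + c := Nat.choose_one_right _
    have h0 : (2 + c).choose 0 = 1 := Nat.choose_zero_right _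
    push_cast [h1, h0]
    ring
  | succ n ih =>
    induction c with
    | zero =>
      rw [wcount_succ_zero, ih 1]
      have hsymm : (2 * n + 3).choose (n + 2) = (2 * n + 3).choose (n + 1) := by
        have := Nat.choose_symm (n := 2 * n + 3) (k := n + 1) (by omega)
        simpa [show 2 * n + 3 - (n + 1) = n + 2 by omega] using this
      have hp1 : (2 * n + 4).choose (n + 2) =
          (2 * n + 3).choose (n + 1) + (2 * n + 3).choose (n + 2) :=
        Nat.choose_succ_succ _ _
      have hp2 : (2 * n + 4).choose (n + 1) =
          (2 * n + 3).choose n + (2 * n + 3).choose (n + 1) :=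
        Nat.choose_succ_succ _ _
      have e1 : 2 * n + 2 + 1 = 2 * n + 3 := by omega
      have e2 : 2 * (n + 1) + 2 + 0 = 2 * n + 4 := by omega
      rw [e1, e2, hp1, hp2, hsymm]
      push_cast
      ring
    | succ c ihc =>
      rw [wcount_succ_succ]
      push_cast [ihc, ih (c + 2)]
      have hp1 : (2 * (n + 1) + 2 + (c + 1)).choose (n + 2) =
          (2 * n + 4 + c).choose (n + 1) + (2 * n + 4 + c).choose (n + 2) := by
        have := Nat.choose_succ_succ (2 * n + 4 + c) (n + 1)
        simpa [show 2 * (n + 1) + 2 + (c + 1) = 2 * n + 4 + c + 1 by omega] using this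
      have hp2 : (2 * (n + 1) + 2 + (c + 1)).choose (n + 1) =
          (2 * n + 4 + c).choose n + (2 * n + 4 + c).choose (n + 1) := by
        have := Nat.choose_succ_succ (2 * n + 4 + c) n
        simpa [show 2 * (n + 1) + 2 + (c + 1) = 2 * n + 4 + c + 1 by omega] using this
      have e1 : 2 * n + 2 + (c + 2) = 2 * n + 4 + c := by omega
      have e2 : 2 * (n + 1) + 2 + c = 2 * n + 4 + c := by omega
      rw [hp1, hp2, e1, e2]
      push_cast
      ring

lemma wcount_zero_right_eq_catalan (n : ℕ) : wcount n 0 = catalan n := by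
  cases n with
  | zero => simp
  | succ n =>
    have key : (wcount (n + 1) 0 : ℤ) =
        ((2 * n + 2).choose (n + 1) : ℤ) - (2 * n + 2).choose n := by
      simpa using wcount_formula n 0
    -- (n+1) * choose(2n+2, n+1) = (n+2) * choose(2n+2, n)
    have h1 : (2 * n + 2).choose (n + 2) * (n + 2) = (2 * n + 2).choose (n + 1) * (n + 1) := by
      have := Nat.choose_succ_right_eq (2 * n + 2) (n + 1)
      simpa [show 2 * n + 2 - (n + 1) = n + 1 by omega] using this
    have hsymm : (2 * n + 2).choose (n + 2) = (2 * n + 2).choose n := by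
      have := Nat.choose_symm (n := 2 * n + 2) (k := n) (by omega)
      simpa [show 2 * n + 2 - n = n + 2 by omega] using this
    rw [hsymm] at h1
    have hcat : (n + 2) * catalan (n + 1) = (2 * n + 2).choose (n + 1) := by
      have := succ_mul_catalan_eq_centralBinom (n + 1)
      simpa [Nat.centralBinom, show 2 * (n + 1) = 2 * n + 2 by omega] using this
    have hmul : ((n : ℤ) + 2) * wcount (n + 1) 0 = ((n : ℤ) + 2) * catalan (n + 1) := by
      rw [key]
      have h1' : ((2 * n + 2).choose n : ℤ) * (n + 2) = ((2 * n + 2).choose (n + 1) : ℤ) * (n + 1) := by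
        exact_mod_cast congrArg (fun x : ℕ => (x : ℤ)) h1
      have hcat' : ((n : ℤ) + 2) * catalan (n + 1) = ((2 * n + 2).choose (n + 1) : ℤ) := by
        exact_mod_cast congrArg (fun x : ℕ => (x : ℤ)) hcat
      linarith
    have := mul_left_cancel₀ (by positivity : ((n : ℤ) + 2) ≠ 0) hmul
    exact_mod_cast this


section IdealEquiv

attribute [local instance] Classical.propDecidable

variable {s : ℕ}

/-- Abbreviation for the admissibility conditions. -/
def IsAdm (s : ℕ) (T : Set (ℕ × ℕ)) : Prop :=
  (∀ q ∈ T, q.1 + 2 ≤ q.2 ∧ q.2 ≤ s) ∧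
    ∀ q ∈ T, ∀ i' j' : ℕ, i' ≤ q.1 → q.2 ≤ j' → j' ≤ s → (i', j') ∈ T

lemma exists_not_mem {T : Set (ℕ × ℕ)} (hT : IsAdm s T) (j₀ : ℕ) :
    ∃ i, (i, j₀) ∉ T := by
  refine ⟨j₀, fun hmem => ?_⟩
  have := (hT.1 (j₀, j₀) hmem).1
  omega

/-- The size of the `j₀`-th column of `T` (least `i` with `(i, j₀) ∉ T`). -/
noncomputable def colSize {T : Set (ℕ × ℕ)} (hT : IsAdm s T) (j₀ : ℕ) : ℕ :=
  Nat.find (exists_not_mem hT j₀)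

lemma colSize_eq_find {T : Set (ℕ × ℕ)} (hT : IsAdm s T) (j₀ : ℕ) :
    colSize hT j₀ = Nat.find (exists_not_mem hT j₀) := rfl

lemma colSize_not_mem {T : Set (ℕ × ℕ)} (hT : IsAdm s T) (j₀ : ℕ) :
    (colSize hT j₀, j₀) ∉ T := Nat.find_spec (exists_not_mem hT j₀)

lemma mem_iff_colSize {T : Set (ℕ × ℕ)} (hT : IsAdm s T) (i j₀ : ℕ) :
    (i, j₀) ∈ T ↔ j₀ ≤ s ∧ i < colSize hT j₀ := by
  constructor
  · intro hmem
    refine ⟨(hT.1 _ hmem).2, ?_⟩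
    by_contra hlt
    push_neg at hlt
    exact colSize_not_mem hT j₀
      (hT.2 (i, j₀) hmem (colSize hT j₀) j₀ hlt le_rfl (hT.1 _ hmem).2)
  · rintro ⟨hj, hi⟩
    rw [colSize_eq_find] at hi
    have := Nat.find_min (exists_not_mem hT j₀) hi
    simpa using this

lemma mem_of_lt_colSize {T : Set (ℕ × ℕ)} (hT : IsAdm s T) {i j₀ : ℕ}
    (hi : i < colSize hT j₀) : (i, j₀) ∈ T := by
  rw [colSize_eq_find] at hi
  have := Nat.find_min (exists_not_mem hT j₀) hi
  simpa using this

lemma colSize_mono {T : Set (ℕ × ℕ)} (hT : IsAdm s T) {j₀ j₁ : ℕ}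
    (h01 : j₀ ≤ j₁) (h1s : j₁ ≤ s) : colSize hT j₀ ≤ colSize hT j₁ := by
  by_contra hlt
  push_neg at hlt
  have hmem : (colSize hT j₁, j₀) ∈ T :=
    (mem_iff_colSize hT _ _).mpr ⟨le_trans h01 h1s, hlt⟩
  exact colSize_not_mem hT j₁ (hT.2 _ hmem _ j₁ le_rfl h01 h1s)

lemma colSize_le {T : Set (ℕ × ℕ)} (hT : IsAdm s T) (j₀ : ℕ) :
    colSize hT j₀ ≤ j₀ - 1 := by
  rcases Nat.eq_zero_or_pos (colSize hT j₀) with h | h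
  · omega
  · have hjs : j₀ ≤ s := by
      have hmem : (0, j₀) ∈ T := mem_of_lt_colSize hT (by omega)
      exact (hT.1 _ hmem).2
    have hmem : (colSize hT j₀ - 1, j₀) ∈ T :=
      (mem_iff_colSize hT _ _).mpr ⟨hjs, by omega⟩
    have := (hT.1 _ hmem).1
    omega

/-- The set of pairs associated to a monotone sequence. -/
def pathSet (s : ℕ) (h : Fin s → ℕ) : Set (ℕ × ℕ) :=
  {q : ℕ × ℕ | 1 ≤ q.2 ∧ q.2 ≤ s ∧ ∃ hj : q.2 - 1 < s, q.1 < h ⟨q.2 - 1, hj⟩}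

lemma mem_pathSet {s : ℕ} (h : Fin s → ℕ) (i j : ℕ) :
    (i, j) ∈ pathSet s h ↔ 1 ≤ j ∧ j ≤ s ∧ ∃ hj : j - 1 < s, i < h ⟨j - 1, hj⟩ :=
  Iff.rfl

lemma pathSet_isAdm (s : ℕ) (h : Fin s → ℕ) (hm : Monotone h)
    (hb : ∀ j : Fin s, h j ≤ (j : ℕ) + 0) : IsAdm s (pathSet s h) := by
  constructor
  · rintro ⟨i, j⟩ hq
    rw [mem_pathSet] at hq
    obtain ⟨h1, h2, hj, hlt⟩ := hq
    have hbd := hb ⟨j - 1, hj⟩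
    simp only [Fin.val_mk] at hbd
    exact ⟨by omega, h2⟩
  · rintro ⟨i, j⟩ hq i' j' hi' hj' hj's
    rw [mem_pathSet] at hq
    obtain ⟨h1, h2, hj, hlt⟩ := hq
    have hj1 : j' - 1 < s := by omega
    rw [mem_pathSet]
    refine ⟨by omega, hj's, hj1, ?_⟩
    have hmono : h ⟨j - 1, hj⟩ ≤ h ⟨j' - 1, hj1⟩ := hm (by simp only [Fin.mk_le_mk]; omega)
    simp only at hi' hj'
    omega

lemma colSize_pathSet {s : ℕ} (h : Fin s → ℕ) (hT : IsAdm s (pathSet s h))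
    (j₀ : ℕ) (h1 : 1 ≤ j₀) (hj : j₀ - 1 < s) :
    colSize hT j₀ = h ⟨j₀ - 1, hj⟩ := by
  have hjs : j₀ ≤ s := by omega
  refine le_antisymm ?_ ?_
  · by_contra hlt
    push_neg at hlt
    have hmem : (h ⟨j₀ - 1, hj⟩, j₀) ∈ pathSet s h :=
      (mem_iff_colSize hT _ _).mpr ⟨hjs, hlt⟩
    rw [mem_pathSet] at hmem
    obtain ⟨-, -, hj', hlt'⟩ := hmem
    exact absurd hlt' (by simp)
  · by_contra hlt
    push_neg at hlt
    have hmem : (colSize hT j₀, j₀) ∈ pathSet s h := by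
      rw [mem_pathSet]
      exact ⟨h1, hjs, hj, hlt⟩
    rw [mem_iff_colSize hT] at hmem
    omega

/-- The bijection between admissible ideals and monotone lattice paths. -/
noncomputable def idealEquiv (s : ℕ) :
    {T : Set (ℕ × ℕ) // IsAdm s T} ≃ PathModel s 0 where
  toFun x :=
    ⟨fun j => colSize x.2 ((j : ℕ) + 1),
      ⟨fun a b hab => colSize_mono x.2 (by omega) (by have := b.2; omega),
       fun j => by
        show colSize x.2 ((j : ℕ) + 1) ≤ (j : ℕ) + 0
        have := colSize_le x.2 ((j : ℕ) + 1)
        omega⟩⟩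
  invFun x := ⟨pathSet s x.1, pathSet_isAdm s x.1 x.2.1 x.2.2⟩
  left_inv x := by
    obtain ⟨T, hT⟩ := x
    refine Subtype.ext (Set.ext fun q => ?_)
    obtain ⟨i, j⟩ := q
    show (i, j) ∈ pathSet s _ ↔ _
    rw [mem_pathSet, mem_iff_colSize hT i j]
    constructor
    · rintro ⟨h1, h2, hj, hlt⟩
      refine ⟨h2, ?_⟩
      dsimp only at hlt
      have hre : j - 1 + 1 = j := by omega
      rw [hre] at hlt
      exact hlt
    · rintro ⟨hj, hi⟩
      have hj1 : 1 ≤ j := by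
        by_contra h0
        push_neg at h0
        interval_cases j
        have hle := colSize_le hT 0
        omega
      have hjs : j - 1 < s := by omega
      refine ⟨hj1, hj, hjs, ?_⟩
      show i < colSize hT (j - 1 + 1)
      have hre : j - 1 + 1 = j := by omega
      rw [hre]
      exact hi
  right_inv x := by
    refine Subtype.ext (funext fun j => ?_)
    dsimp only
    rw [colSize_pathSet x.1 _ ((j : ℕ) + 1) (by omega) (by simp)]
    exact congrArg x.1 (Fin.ext (by simp))

end IdealEquiv

/-- The number of admissible (monomial) ideals of the path algebra of the linearly oriented
quiver of type `A_{s+1}` equals the Catalan number `C_s`. Here the vertices are `0, …, s`,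
a path of length `≥ 2` is a pair `(i, j)` with `i + 2 ≤ j ≤ s`, and an admissible ideal is
a set `T` of such paths closed under multiplication by paths on either side (i.e. if
`(i, j) ∈ T`, `i' ≤ i` and `j ≤ j' ≤ s`, then `(i', j') ∈ T`); these ideals correspond to
monotonic lattice paths in an `s × s` grid. Moreover `C_s = (1/(s+1))·binom(2s, s)`. -/
theorem admissible_ideals_card_eq_catalan (s : ℕ) :
    Nat.card {T : Set (ℕ × ℕ) //
        (∀ q ∈ T, q.1 + 2 ≤ q.2 ∧ q.2 ≤ s) ∧
        ∀ q ∈ T, ∀ i' j' : ℕ, i' ≤ q.1 → q.2 ≤ j' → j' ≤ s → (i', j') ∈ T} =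
      catalan s ∧ (s + 1) * catalan s = (2 * s).choose s := by
  constructor
  · have key := Nat.card_congr (idealEquiv s)
    rw [card_pathModel, wcount_zero_right_eq_catalan] at key
    exact key
  · have := succ_mul_catalan_eq_centralBinom s
    simpa [Nat.centralBinom] using this
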